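/- arXiv:1803.01418 — 6 statements merged into one kernel-verified Lean document; each statement's English description precedes it below -/
import Mathlib

section
/- For every ordinal λ > 0, the ordinal 1 is the unique x < ω^ω^λ such that x·x = x and there exists y < ω^ω^λ with x·y ≠ x. -/
open Ordinal

theorem one_unique_characterization (l : Ordinal) (hl : 0 < l) (x : Ordinal)
    (hx : x < ω ^ ω ^ l) :
    (x * x = x ∧ ∃ y : Ordinal, y < ω ^ ω ^ l ∧ x * y ≠ x) ↔ x = 1 := by
  have h2 : (2 : Ordinal) < ω ^ ω ^ l := by
    calc (2 : Ordinal) < ω := by exact_mod_cast nat_lt_omega0 2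
    _ ≤ ω ^ ω ^ l := Ordinal.left_le_opow _ (opow_pos _ omega0_pos)
  constructor
  · rintro ⟨hxx, y, hy, hxy⟩
    rcases lt_trichotomy x 1 with h | h | h
    · exfalso
      apply hxy
      have : x = 0 := Ordinal.lt_one_iff_zero.mp h
      simp [this]
    · exact h
    · exfalso
      have hx0 : (0 : Ordinal) < x := lt_trans zero_lt_one h
      have h2x : (2 : Ordinal) ≤ x := by exact_mod_cast Order.add_one_le_of_lt h
      have : x * 2 ≤ x * x := mul_le_mul_right h2x x
      have hxx2 : x * 2 = x + x := by
        have : x * (1 + 1) = x * 1 + x * 1 := mul_add x 1 1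
        simpa [one_add_one_eq_two] using this
      rw [hxx2, hxx] at this
      have := lt_of_lt_of_le (lt_add_of_pos_right x hx0) this
      exact lt_irrefl x this
  · rintro rfl
    refine ⟨by simp, 2, h2, by simp⟩
end

section
/- The ordinal ω + 1 is the unique successor ordinal p such that p is multiplicatively prime, p ≠ ω, and p·ω = ω². -/
open Ordinal

/-- An ordinal `p > 1` is multiplicatively prime if it cannot be written as a
product of two ordinals each strictly less than `p`. -/
def OrdinalPrime (p : Ordinal) : Prop :=
  1 < p ∧ ¬∃ β γ : Ordinal, β < p ∧ γ < p ∧ p = β * γ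

private lemma aux_add_mul (r : Ordinal) (hr : r < ω) :
    ∀ m : ℕ, 1 ≤ m → (ω + r) * (m : ℕ) = ω * (m : ℕ) + r := by
  intro m hm
  induction m with
  | zero => omega
  | succ k ih =>
      rcases Nat.eq_zero_or_pos k with rfl | hk
      · simp
      · have hcast : ((k + 1 : ℕ) : Ordinal) = (k : ℕ) + 1 := by norm_num
        rw [hcast, mul_add_one, mul_add_one, ih hk, add_assoc, add_assoc,
          ← add_assoc r, add_omega0 hr]

private lemma succ_not_limit {δ : Ordinal} (h : Order.IsSuccLimit (δ + 1)) : False := by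
  have := h.succ_lt (lt_add_one δ)
  simp [← add_one_eq_succ] at this

theorem omega_add_one_unique (p : Ordinal) :
    ((∃ δ : Ordinal, p = δ + 1) ∧ OrdinalPrime p ∧ p ≠ ω ∧ p * ω = ω ^ (2 : Ordinal))
      ↔ p = ω + 1 := by
  have h2 : (ω : Ordinal) ^ (2 : Ordinal) = ω * ω := by
    have : (2 : Ordinal) = 1 + 1 := by norm_num
    rw [this, opow_add, opow_one]
  constructor
  · rintro ⟨⟨δ, rfl⟩, ⟨hp1, hprime⟩, hpω, hmul⟩
    rw [h2] at hmul
    set p := δ + 1 with hpdef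
    have hωp : ω < p := by
      rcases lt_or_ge p ω with h | h
      · exfalso
        have hp0 : (0 : Ordinal) < p := lt_trans zero_lt_one hp1
        rw [mul_omega0 hp0 h] at hmul
        have : ω < ω * ω := by
          conv_lhs => rw [← mul_one ω]
          exact mul_lt_mul_of_pos_left one_lt_omega0 omega0_pos
        exact this.ne hmul
      · exact lt_of_le_of_ne h (Ne.symm hpω)
    have hpω2 : p < ω * ω := by
      have hle : p ≤ ω * ω := by
        calc p = p * 1 := (mul_one p).symm
        _ ≤ p * ω := mul_le_mul_right one_lt_omega0.le p
        _ = ω * ω := hmul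
      rcases lt_or_eq_of_le hle with h | h
      · exact h
      · exact absurd (h ▸ isSuccLimit_mul_right omega0_pos isSuccLimit_omega0) succ_not_limit
    have hdecomp := div_add_mod p ω
    have hrω : p % ω < ω := mod_lt p omega0_ne_zero
    have hqω : p / ω < ω := (div_lt omega0_ne_zero).2 hpω2
    obtain ⟨m, hm⟩ := lt_omega0.1 hqω
    obtain ⟨n, hn⟩ := lt_omega0.1 hrω
    rw [hm, hn] at hdecomp
    have hnω : ((n : Ordinal)) < ω := nat_lt_omega0 n
    have hm1 : 1 ≤ m := by
      by_contra h
      push_neg at h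
      interval_cases m
      simp at hdecomp
      rw [← hdecomp] at hωp
      exact absurd hωp (nat_lt_omega0 n).not_gt
    have hn1 : 1 ≤ n := by
      by_contra h
      push_neg at h
      interval_cases n
      rw [Nat.cast_zero, add_zero] at hdecomp
      have hmpos : (0 : Ordinal) < (m : ℕ) := by exact_mod_cast hm1
      exact succ_not_limit (hdecomp ▸ isSuccLimit_mul_left isSuccLimit_omega0 hmpos)
    -- m = 1
    have hmeq : m = 1 := by
      by_contra h
      have hm2 : 2 ≤ m := by omega
      refine hprime ⟨ω + n, (m : ℕ), ?_, ?_, ?_⟩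
      · calc ω + (n : Ordinal) < ω + ω := add_lt_add_right hnω ω
          _ = ω * (1 + 1) := by rw [mul_add, mul_one]
          _ ≤ ω * m := by
              apply mul_le_mul_right
              have h21 : ((2:ℕ):Ordinal) = 1 + 1 := by norm_num
              rw [← h21]
              exact_mod_cast hm2
          _ ≤ ω * m + n := le_self_add
          _ = p := hdecomp
      · exact (nat_lt_omega0 m).trans hωp
      · rw [aux_add_mul _ hnω m hm1, hdecomp]
    rw [hmeq, Nat.cast_one, mul_one] at hdecomp
    -- n = 1
    have hneq : n = 1 := by
      by_contra h
      have hn2 : 2 ≤ n := by omega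
      refine hprime ⟨(n : ℕ), ω + 1, ?_, ?_, ?_⟩
      · exact hnω.trans hωp
      · calc ω + (1 : Ordinal) < ω + n := by
              apply add_lt_add_right
              exact_mod_cast hn2
          _ = p := hdecomp
      · rw [mul_add, mul_one, natCast_mul_omega0 (by omega), hdecomp]
    rw [hneq, Nat.cast_one] at hdecomp
    exact hdecomp.symm
  · rintro rfl
    refine ⟨⟨ω, rfl⟩, ⟨?_, ?_⟩, ?_, ?_⟩
    · exact lt_trans one_lt_omega0 (lt_add_one ω)
    · rintro ⟨β, γ, hβ, hγ, heq⟩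
      rw [add_one_eq_succ, Order.lt_succ_iff] at hβ hγ
      rcases eq_or_lt_of_le hγ with rfl | hγω
      · rcases eq_zero_or_pos β with rfl | hβ0
        · rw [zero_mul] at heq
          exact absurd heq (by simp)
        · exact succ_not_limit (heq ▸ isSuccLimit_mul_right hβ0 isSuccLimit_omega0)
      · rcases eq_or_lt_of_le hβ with rfl | hβω
        · rcases eq_zero_or_pos γ with rfl | hγ0
          · rw [mul_zero] at heq
            exact absurd heq (by simp)
          · exact succ_not_limit (heq ▸ isSuccLimit_mul_left isSuccLimit_omega0 hγ0)
        · have : β * γ < ω := principal_mul_omega0 hβω hγω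
          rw [← heq] at this
          exact (lt_add_one ω).asymm this
    · exact (lt_add_one ω).ne'
    · rw [h2]
      exact add_mul_of_isSuccLimit one_add_omega0 isSuccLimit_omega0
end

section
/- If x is an ordinal satisfying x·(ω+1) = (ω+1)·x and x·(ω+1) ≠ x, then x = (ω+1)^i for some natural number i. -/
open Ordinal

/-- Uniqueness of base-ω decomposition. -/
lemma omega_decomp_inj {s t r r' : Ordinal} (hr : r < ω) (hr' : r' < ω)
    (h : ω * s + r = ω * t + r') : s = t ∧ r = r' := by
  have hs : (ω * s + r) / ω = s := by
    rw [mul_add_div _ omega0_ne_zero, div_eq_zero_of_lt hr, add_zero]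
  have ht : (ω * t + r') / ω = t := by
    rw [mul_add_div _ omega0_ne_zero, div_eq_zero_of_lt hr', add_zero]
  have hst : s = t := by rw [← hs, ← ht, h]
  refine ⟨hst, ?_⟩
  rw [hst] at h
  exact (add_right_inj _).1 h

lemma b_absorb {a b : Ordinal} (hb : b < ω) (ha : a ≠ 0) : b + ω * a = ω * a := by
  apply add_absorp (by rwa [opow_one])
  rw [opow_one]
  exact Ordinal.le_mul_left ω (pos_iff_ne_zero.2 ha)

lemma q_mul_omega {a b : Ordinal} (hb : b < ω) (ha : a ≠ 0) :
    (ω * a + b) * ω = ω * (a * ω) := by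
  rw [add_mul_of_isSuccLimit (b_absorb hb ha) isSuccLimit_omega0, mul_assoc]

/-- Infinite descent: no positive solution to q·ω + q = ω·q. -/
lemma descent : ∀ q : Ordinal, q * ω + q = ω * q → q = 0 := by
  intro q
  induction q using Ordinal.induction with
  | h q IH =>
    intro h
    by_contra hq0
    have hmod : q % ω < ω := mod_lt q omega0_ne_zero
    have hdec : ω * (q / ω) + q % ω = q := div_add_mod q ω
    set a := q / ω
    set b := q % ω
    rcases eq_or_ne a 0 with ha0 | ha0
    · -- q = b < ω, positive natural
      have hqb : q = b := by rw [← hdec, ha0, mul_zero, zero_add]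
      have hqpos : 0 < q := pos_iff_ne_zero.2 hq0
      have h1 : q * ω = ω := mul_omega0 hqpos (hqb ▸ hmod)
      rw [h1] at h
      have h2 : ω * 1 + q = ω * q + 0 := by rw [mul_one, add_zero, h]
      obtain ⟨h2, h3⟩ := omega_decomp_inj (hqb ▸ hmod) omega0_pos h2
      exact hq0 h3
    · -- q = ω*a + b with a ≠ 0
      have hmul : q * ω = ω * (a * ω) := by rw [← hdec]; exact q_mul_omega hmod ha0
      have heq : ω * (a * ω + a) + b = ω * q + 0 := by
        rw [mul_add, add_zero, add_assoc, hdec, ← h, hmul]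
      obtain ⟨h2, h3⟩ := omega_decomp_inj hmod omega0_pos heq
      -- b = 0, so q = ω * a, and a*ω + a = q
      have hq : q = ω * a := by rw [← hdec, h3, add_zero]
      have hale : a ≤ ω * a := Ordinal.le_mul_right a omega0_pos
      rcases eq_or_lt_of_le hale with hcase | hcase
      · -- a = ω*a = q : then a*ω + a = a, impossible
        have haq : a = q := by rw [hq, ← hcase]
        have heq2 : a * ω + a = a := by rw [h2, haq]
        have hlt : a < a * ω + a := by
          have h4 : a ≤ a * ω := Ordinal.le_mul_left a omega0_pos
          have h5 : 0 < a := pos_iff_ne_zero.2 (fun h0 => hq0 (haq ▸ h0))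
          calc a ≤ a * ω := h4
          _ < a * ω + a := lt_add_of_pos_right _ h5
        exact absurd heq2 hlt.ne'
      · have haltq : a < q := hq ▸ hcase
        have : a * ω + a = ω * a := by rw [h2, hq]
        exact ha0 (IH a haltq this)

/-- (ω+1)^(i+1) = ω·(ω+1)^i + 1 -/
lemma pow_form : ∀ i : ℕ, ((ω + 1) : Ordinal) ^ (i + 1) = ω * (ω + 1) ^ i + 1 := by
  intro i
  induction i with
  | zero => simp
  | succ i IH =>
    have hω : ((ω : Ordinal) + 1) * ω = ω * ω :=
      add_mul_of_isSuccLimit one_add_omega0 isSuccLimit_omega0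
    rw [pow_succ' (ω + 1) (i + 1), IH, mul_add, ← mul_assoc, hω, mul_assoc, mul_add,
      mul_one, mul_one, ← add_assoc]

/-- Solutions of q·ω + q = ω·q + 1 are powers of ω+1. -/
lemma solveE : ∀ q : Ordinal, q * ω + q = ω * q + 1 → ∃ i : ℕ, q = (ω + 1) ^ i := by
  intro q
  induction q using Ordinal.induction with
  | h q IH =>
    intro h
    have hq0 : q ≠ 0 := by
      intro h0; rw [h0, zero_mul, zero_add, mul_zero, zero_add] at h
      exact zero_ne_one h
    have hmod : q % ω < ω := mod_lt q omega0_ne_zero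
    have hdec : ω * (q / ω) + q % ω = q := div_add_mod q ω
    set a := q / ω
    set b := q % ω
    rcases eq_or_ne a 0 with ha0 | ha0
    · -- q = b, finite positive
      have hqb : q = b := by rw [← hdec, ha0, mul_zero, zero_add]
      have h1 : q * ω = ω := mul_omega0 (pos_iff_ne_zero.2 hq0) (hqb ▸ hmod)
      rw [h1] at h
      have h2 : ω * 1 + q = ω * q + 1 := by rw [mul_one, h]
      obtain ⟨h2, h3⟩ := omega_decomp_inj (hqb ▸ hmod) one_lt_omega0 h2
      exact ⟨0, by rw [pow_zero, ← h3]⟩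
    · have hmul : q * ω = ω * (a * ω) := by rw [← hdec]; exact q_mul_omega hmod ha0
      have heq : ω * (a * ω + a) + b = ω * q + 1 := by
        rw [mul_add, add_assoc, hdec, ← h, hmul]
      obtain ⟨h2, h3⟩ := omega_decomp_inj hmod one_lt_omega0 heq
      -- b = 1, q = ω*a + 1, and a*ω + a = q = ω*a + 1
      have hq : q = ω * a + 1 := by rw [← hdec, h3]
      have hEa : a * ω + a = ω * a + 1 := by rw [h2, hq]
      have haltq : a < q := by
        calc a ≤ ω * a := Ordinal.le_mul_right a omega0_pos
        _ < ω * a + 1 := lt_add_one _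
        _ = q := hq.symm
      obtain ⟨i, hi⟩ := IH a haltq hEa
      exact ⟨i + 1, by rw [pow_form, ← hi, ← hq]⟩

theorem commuting_with_omega_add_one (x : Ordinal)
    (h₁ : x * (ω + 1) = (ω + 1) * x) (h₂ : x * (ω + 1) ≠ x) :
    ∃ i : ℕ, x = (ω + 1) ^ i := by
  have hx0 : x ≠ 0 := by
    intro h0; rw [h0, zero_mul] at h₂; exact h₂ rfl
  have hL : x * (ω + 1) = x * ω + x := by rw [mul_add, mul_one]
  have hmod : x % ω < ω := mod_lt x omega0_ne_zero
  have hdec : ω * (x / ω) + x % ω = x := div_add_mod x ω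
  set a := x / ω
  set b := x % ω
  rcases eq_or_ne b 0 with hb0 | hb0
  · -- x = ω*a : show (ω+1)*x = ω*x and use descent lemma
    exfalso
    have hx : x = ω * a := by rw [← hdec, hb0, add_zero]
    have hR : (ω + 1) * x = ω * x := by
      rw [hx, ← mul_assoc, add_mul_of_isSuccLimit one_add_omega0 isSuccLimit_omega0, mul_assoc]
    have : x * ω + x = ω * x := by rw [← hL, h₁, hR]
    exact hx0 (descent x this)
  · -- b is a positive natural, so b = m + 1
    obtain ⟨n, hn⟩ := lt_omega0.1 hmod
    have hb1 : (ω + 1) * b = ω * b + 1 := by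
      rcases n with _ | m
      · exact absurd (by simpa using hn) hb0
      · have hbm : b = Order.succ (m : Ordinal) := by
          rw [hn, Nat.cast_succ, add_one_eq_succ]
        rw [hbm]
        exact add_mul_succ _ one_add_omega0
    have hR : (ω + 1) * x = ω * x + 1 := by
      conv_lhs => rw [← hdec]
      conv_rhs => rw [← hdec]
      rw [mul_add, ← mul_assoc, add_mul_of_isSuccLimit one_add_omega0 isSuccLimit_omega0, hb1,
        mul_assoc, mul_add, ← add_assoc]
    have : x * ω + x = ω * x + 1 := by rw [← hL, h₁, hR]
    exact solveE x this
end

section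
/- For every natural number n ≥ 0, every nonzero ordinal z satisfying z·(ω+1)^n·(ω²+1) = (ω+1)^n·(ω²+1)·z is of the form ((ω+1)^n·(ω²+1))^r for some natural number r. -/
open Ordinal

namespace CommPow

lemma two_le_omega : (2 : Ordinal) ≤ ω := by
  have := nat_lt_omega0 2
  simpa using this.le

lemma double_le {c : Ordinal} : ω ^ c + ω ^ c ≤ ω ^ (c + 1) := by
  have h : ω ^ c + ω ^ c = ω ^ c * 2 := by
    rw [← one_add_one_eq_two, mul_add, mul_one]
  rw [h, opow_add, opow_one]
  exact mul_le_mul_right two_le_omega _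

lemma mul_omega_between {a b : Ordinal} (h1 : ω ^ b ≤ a) (h2 : a < ω ^ (b + 1)) :
    a * ω = ω ^ (b + 1) := by
  apply le_antisymm
  · rw [mul_le_iff_of_isSuccLimit isSuccLimit_omega0]
    intro m hm
    obtain ⟨k, rfl⟩ := lt_omega0.1 hm
    have : ∀ k : ℕ, a * k < ω ^ (b + 1) := by
      intro k
      induction k with
      | zero => simpa using opow_pos (b + 1) omega0_pos
      | succ k ih =>
        have : a * (k + 1 : ℕ) = a * k + a := by push_cast [mul_add, mul_one]; ring_nf
        rw [this]
        exact principal_add_omega0_opow _ ih h2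
    exact (this k).le
  · calc ω ^ (b + 1) = ω ^ b * ω := by rw [opow_add, opow_one]
      _ ≤ a * ω := mul_le_mul_left h1 ω

lemma mul_opow_between {a b c : Ordinal} (h1 : ω ^ b ≤ a) (h2 : a < ω ^ (b + 1))
    (hc : 1 ≤ c) : a * ω ^ c = ω ^ (b + c) := by
  obtain ⟨c', rfl⟩ : ∃ c', c = 1 + c' := ⟨c - 1, (Ordinal.add_sub_cancel_of_le hc).symm⟩
  rw [opow_add, opow_one, ← mul_assoc, mul_omega_between h1 h2, ← opow_add, add_assoc]

lemma nf_lt_succ {a c r : Ordinal} (hc : c < ω) (hr : r < ω ^ a) :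
    ω ^ a * c + r < ω ^ (a + 1) := by
  calc ω ^ a * c + r < ω ^ a * c + ω ^ a := add_lt_add_right hr _
    _ = ω ^ a * (c + 1) := by rw [mul_add, mul_one]
    _ ≤ ω ^ a * ω := by
        apply mul_le_mul_right
        rw [add_one_eq_succ]
        exact Order.succ_le_of_lt hc
    _ = ω ^ (a + 1) := by rw [opow_add, opow_one]

lemma nf_le {a c : Ordinal} (r : Ordinal) (hc : 0 < c) : ω ^ a ≤ ω ^ a * c + r :=
  le_trans (Ordinal.le_mul_left _ hc) (le_self_add)

lemma nf_lt_of_lt {a a' c c' r r' : Ordinal} (hlt : a < a') (hc : c < ω) (hr : r < ω ^ a)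
    (hc0' : 0 < c') : ω ^ a * c + r < ω ^ a' * c' + r' := by
  calc ω ^ a * c + r < ω ^ (a + 1) := nf_lt_succ hc hr
    _ ≤ ω ^ a' := by
        apply opow_le_opow_right omega0_pos
        rw [add_one_eq_succ]
        exact Order.succ_le_of_lt hlt
    _ ≤ ω ^ a' * c' + r' := nf_le _ hc0'

lemma nf_unique {a a' c c' r r' : Ordinal} (hc0 : 0 < c) (hc : c < ω) (hc0' : 0 < c')
    (hc' : c' < ω) (hr : r < ω ^ a) (hr' : r' < ω ^ a')
    (h : ω ^ a * c + r = ω ^ a' * c' + r') : a = a' ∧ c = c' ∧ r = r' := by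
  have ha : a = a' := by
    rcases lt_trichotomy a a' with hlt | heq | hlt
    · exact absurd h (nf_lt_of_lt hlt hc hr hc0').ne
    · exact heq
    · exact absurd h.symm (nf_lt_of_lt hlt hc' hr' hc0).ne
  subst ha
  have hcc : c = c' := by
    rcases lt_trichotomy c c' with hlt | heq | hlt
    · exfalso
      have h1 : ω ^ a * c + r < ω ^ a * c' := by
        calc ω ^ a * c + r < ω ^ a * c + ω ^ a := add_lt_add_right hr _
          _ = ω ^ a * (c + 1) := by rw [mul_add, mul_one]
          _ ≤ ω ^ a * c' := by
              apply mul_le_mul_right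
              rw [add_one_eq_succ]
              exact Order.succ_le_of_lt hlt
      exact absurd h (h1.trans_le (le_self_add)).ne
    · exact heq
    · exfalso
      have h1 : ω ^ a * c' + r' < ω ^ a * c := by
        calc ω ^ a * c' + r' < ω ^ a * c' + ω ^ a := add_lt_add_right hr' _
          _ = ω ^ a * (c' + 1) := by rw [mul_add, mul_one]
          _ ≤ ω ^ a * c := by
              apply mul_le_mul_right
              rw [add_one_eq_succ]
              exact Order.succ_le_of_lt hlt
      exact absurd h.symm (h1.trans_le (le_self_add)).ne
  subst hcc
  exact ⟨rfl, rfl, (add_right_inj _).1 h⟩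

lemma decomp {σ : Ordinal} (h : σ ≠ 0) :
    ∃ d e σ₂ : Ordinal, σ = ω ^ d * e + σ₂ ∧ 0 < e ∧ e < ω ∧ σ₂ < ω ^ d ∧ ω ^ d ≤ σ := by
  set d := log ω σ with hd
  refine ⟨d, σ / ω ^ d, σ % ω ^ d, (div_add_mod σ (ω ^ d)).symm, ?_, ?_, ?_, ?_⟩
  · rw [Ordinal.lt_div (opow_ne_zero d omega0_ne_zero)]
    · simpa using opow_log_le_self ω h
  · rw [Ordinal.div_lt (opow_ne_zero d omega0_ne_zero), ← opow_succ]
    exact lt_opow_succ_log_self one_lt_omega0 σ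
  · exact mod_lt σ (opow_ne_zero d omega0_ne_zero)
  · exact opow_log_le_self ω h

lemma add_mul_nat {a t : Ordinal} (ht : t < ω ^ a) (m : ℕ) :
    (ω ^ a + t) * ((m : Ordinal) + 1) = ω ^ a * ((m : Ordinal) + 1) + t := by
  induction m with
  | zero => simp
  | succ m ih =>
    have hc : ((m + 1 : ℕ) : Ordinal) + 1 = ((m : Ordinal) + 1) + 1 := by push_cast; ring_nf
    rw [hc]
    calc (ω ^ a + t) * ((m : Ordinal) + 1 + 1)
        = (ω ^ a + t) * ((m : Ordinal) + 1) + ((ω ^ a + t) * 1) := by rw [mul_add]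
      _ = ω ^ a * ((m : Ordinal) + 1) + t + (ω ^ a + t) := by rw [mul_one, ih]
      _ = ω ^ a * ((m : Ordinal) + 1) + ((t + ω ^ a) + t) := by
          rw [add_assoc, add_assoc]
      _ = ω ^ a * ((m : Ordinal) + 1) + (ω ^ a + t) := by rw [add_omega0_opow ht]
      _ = ω ^ a * ((m : Ordinal) + 1 + 1) + t := by
          rw [mul_add (ω ^ a) ((m : Ordinal) + 1) 1, mul_one, add_assoc]

lemma add_mul_fin {a t : Ordinal} (ht : t < ω ^ a) {e : Ordinal} (he0 : 0 < e) (heω : e < ω) :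
    (ω ^ a + t) * e = ω ^ a * e + t := by
  obtain ⟨k, rfl⟩ := lt_omega0.1 heω
  obtain ⟨m, rfl⟩ : ∃ m : ℕ, k = m + 1 := by
    cases k with
    | zero => simp at he0
    | succ m => exact ⟨m, rfl⟩
  have hc : ((m + 1 : ℕ) : Ordinal) = (m : Ordinal) + 1 := by push_cast; ring_nf
  rw [hc]
  exact add_mul_nat ht m

noncomputable def run (c : Ordinal) : ℕ → Ordinal
  | 0 => 0
  | k + 1 => ω ^ (c + k + 1) + run c k

lemma run_ge {c w : Ordinal} (hw : ω ^ c ≤ w) (k : ℕ) : ω ^ (c + k) ≤ run c k + w := by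
  cases k with
  | zero => simpa [run] using hw
  | succ k =>
    have hc : c + ((k + 1 : ℕ) : Ordinal) = c + k + 1 := by
      rw [Nat.cast_succ, ← add_assoc]
    rw [hc, run]
    exact le_trans (le_self_add) (le_self_add)

lemma run_lt {c w : Ordinal} (hw : w < ω ^ (c + 1)) (k : ℕ) : run c k + w < ω ^ (c + k + 1) := by
  induction k with
  | zero => simpa [run] using hw
  | succ k ih =>
    have hc : c + ((k + 1 : ℕ) : Ordinal) + 1 = (c + k + 1) + 1 := by
      rw [Nat.cast_succ, ← add_assoc]
    rw [hc, run, add_assoc]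
    calc ω ^ (c + k + 1) + (run c k + w) < ω ^ (c + k + 1) + ω ^ (c + k + 1) :=
          add_lt_add_right ih _
      _ ≤ ω ^ (c + k + 1 + 1) := double_le

lemma run_mul {c v : Ordinal} (h1 : ω ^ c ≤ v) (h2 : v < ω ^ (c + 1)) (j : ℕ) :
    v * (ω + 1) ^ j = run c j + v := by
  induction j with
  | zero => simp [run]
  | succ j ih =>
    have hb : (run c j + v) * ω = ω ^ (c + j + 1) :=
      mul_omega_between (run_ge h1 j) (run_lt h2 j)
    rw [pow_succ, ← mul_assoc, ih, mul_add, mul_one, hb, run]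
    exact (add_assoc _ _ _).symm

lemma peel {M t : Ordinal} (ht : t < ω ^ M) (k : ℕ) :
    ∀ {c σ u : Ordinal}, σ < ω ^ c → u < ω ^ c →
      (ω ^ (M + 1) + t) * σ = run c k + (ω ^ c + u) →
      ∃ τ, τ < ω ^ c ∧ (ω ^ (M + 1) + t) * τ = ω ^ c + u := by
  induction k with
  | zero =>
    intro c σ u hσ hu heq
    exact ⟨σ, hσ, by simpa [run] using heq⟩
  | succ k IH =>
    intro c σ u hσ hu heq
    have htN : t < ω ^ (M + 1) :=
      ht.trans_le (opow_le_opow_right omega0_pos (le_self_add))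
    have hXl : ω ^ (M + 1) ≤ ω ^ (M + 1) + t := le_self_add
    have hXu : ω ^ (M + 1) + t < ω ^ (M + 1 + 1) :=
      lt_of_lt_of_le (add_lt_add_right htN _) double_le
    have hX0 : (0 : Ordinal) < ω ^ (M + 1) + t :=
      lt_of_lt_of_le (opow_pos _ omega0_pos) hXl
    have hσ0 : σ ≠ 0 := by
      rintro rfl
      rw [mul_zero] at heq
      have : ω ^ c ≤ run c (k + 1) + (ω ^ c + u) :=
        le_trans (le_self_add) (le_add_self)
      rw [← heq] at this
      exact absurd this (not_le.2 (opow_pos _ omega0_pos))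
    obtain ⟨d, e, σ₂, hdec, he0, heω, hσ₂, hdle⟩ := decomp hσ0
    -- remainder bound for the RHS normal form
    have hucb : ω ^ c + u < ω ^ (c + 1) := lt_of_lt_of_le (add_lt_add_right hu _) double_le
    have hrem : run c k + (ω ^ c + u) < ω ^ (c + k + 1) := run_lt hucb k
    have hrhs : run c (k + 1) + (ω ^ c + u) = ω ^ (c + k + 1) * 1 + (run c k + (ω ^ c + u)) := by
      rw [run, mul_one, add_assoc]
    rcases eq_or_ne d 0 with hd0 | hd0
    · exfalso
      -- σ is finite; leads to t being too large
      have hσ₂0 : σ₂ = 0 := by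
        rw [hd0, opow_zero] at hσ₂
        exact Ordinal.lt_one_iff_zero.1 hσ₂
      have hσe : σ = e := by rw [hdec, hd0, hσ₂0, opow_zero, one_mul, add_zero]
      have hXσ : (ω ^ (M + 1) + t) * σ = ω ^ (M + 1) * e + t := by
        rw [hσe]; exact add_mul_fin htN he0 heω
      rw [hXσ, hrhs] at heq
      obtain ⟨hexp, hcoef, hrem'⟩ := nf_unique he0 heω one_pos one_lt_omega0 htN hrem heq
      -- hexp : M + 1 = c + k + 1, hence M = c + k
      have hM : M = c + k := by
        have := hexp
        rw [add_one_eq_succ, add_one_eq_succ] at this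
        exact Order.succ_injective this
      have : ω ^ M ≤ t := by
        rw [hrem', hM]
        exact run_ge (le_self_add) k
      exact absurd this (not_le.2 ht)
    · have hd1 : 1 ≤ d := Ordinal.one_le_iff_ne_zero.2 hd0
      have hXd : (ω ^ (M + 1) + t) * ω ^ d = ω ^ (M + 1 + d) := mul_opow_between hXl hXu hd1
      have hXσdec : (ω ^ (M + 1) + t) * σ
          = ω ^ (M + 1 + d) * e + (ω ^ (M + 1) + t) * σ₂ := by
        rw [hdec, mul_add, ← mul_assoc, hXd]
      have hXσ₂ : (ω ^ (M + 1) + t) * σ₂ < ω ^ (M + 1 + d) := by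
        calc (ω ^ (M + 1) + t) * σ₂ < (ω ^ (M + 1) + t) * ω ^ d :=
              (mul_lt_mul_iff_of_pos_left hX0).2 hσ₂
          _ = ω ^ (M + 1 + d) := hXd
      rw [hXσdec, hrhs] at heq
      obtain ⟨hexp, hcoef, hrem'⟩ := nf_unique he0 heω one_pos one_lt_omega0 hXσ₂ hrem heq
      have hσ₂c : σ₂ < ω ^ c := lt_of_lt_of_le hσ₂ (le_trans hdle hσ.le)
      exact IH hσ₂c hu hrem'

lemma master {M t X : Ordinal} {j : ℕ} (hM : 1 ≤ M) (htM : t < ω ^ M)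
    (hX : X = ω ^ (M + 1) + t)
    (hrun : ∀ {c v : Ordinal}, ω ^ c ≤ v → v < ω ^ (c + 1) → v * t = run c j + v) :
    ∀ z : Ordinal, z ≠ 0 → z * X = X * z → ∃ r : ℕ, z = X ^ r := by
  intro z
  induction z using Ordinal.induction with
  | h z IH =>
    intro hz0 hcomm
    have hcomm' : z * X = X * z := hcomm
    have hzpos : 0 < z := pos_iff_ne_zero.2 hz0
    have htN : t < ω ^ (M + 1) :=
      htM.trans_le (opow_le_opow_right omega0_pos (le_self_add))
    have hXl : ω ^ (M + 1) ≤ X := by rw [hX]; exact le_self_add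
    have hXu : X < ω ^ (M + 1 + 1) := by
      rw [hX]; exact lt_of_lt_of_le (add_lt_add_right htN _) double_le
    have hX0 : (0 : Ordinal) < X := lt_of_lt_of_le (opow_pos _ omega0_pos) hXl
    have hN1 : (1 : Ordinal) ≤ M + 1 := le_add_self
    obtain ⟨b, c, s, hzdec, hc0, hcω, hs, hble⟩ := decomp hz0
    have hzu : z < ω ^ (b + 1) := by rw [hzdec]; exact nf_lt_succ hcω hs
    -- z * X in normal form
    have hzX : z * X = ω ^ (b + (M + 1)) * 1 + z * t := by
      rw [hX, mul_add, mul_opow_between hble hzu hN1, mul_one]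
    have hzt_lt : z * t < ω ^ (b + (M + 1)) := by
      calc z * t ≤ z * ω ^ M := mul_le_mul_right htM.le z
        _ = ω ^ (b + M) := mul_opow_between hble hzu hM
        _ < ω ^ (b + (M + 1)) := by
            rw [opow_lt_opow_iff_right one_lt_omega0]
            exact add_lt_add_right (lt_add_one M) b
    by_cases hb0 : b = 0
    · -- z is finite, must be 1
      subst hb0
      rw [zero_add] at hzX hzt_lt
      have hs0 : s = 0 := by
        rw [opow_zero] at hs
        exact Ordinal.lt_one_iff_zero.1 hs
      have hzc : z = c := by rw [hzdec, hs0, opow_zero, one_mul, add_zero]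
      have hXz : X * z = ω ^ (M + 1) * c + t := by
        rw [hX, hzc]; exact add_mul_fin htN hc0 hcω
      rw [hzX, hXz] at hcomm
      obtain ⟨-, hc1, -⟩ := nf_unique one_pos one_lt_omega0 hc0 hcω hzt_lt htN hcomm
      refine ⟨0, ?_⟩
      rw [pow_zero, hzc, ← hc1]
    · have hb1 : 1 ≤ b := Ordinal.one_le_iff_ne_zero.2 hb0
      have hXb : X * ω ^ b = ω ^ (M + 1 + b) := mul_opow_between hXl hXu hb1
      have hXz : X * z = ω ^ (M + 1 + b) * c + X * s := by
        rw [hzdec, mul_add, ← mul_assoc, hXb]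
      have hXs_lt : X * s < ω ^ (M + 1 + b) := by
        calc X * s < X * ω ^ b := (mul_lt_mul_iff_of_pos_left hX0).2 hs
          _ = ω ^ (M + 1 + b) := hXb
      rw [hzX, hXz] at hcomm
      obtain ⟨hexp, hc1, hmaster⟩ :=
        nf_unique one_pos one_lt_omega0 hc0 hcω hzt_lt hXs_lt hcomm
      -- z = ω ^ b + s
      have hzeq : z = ω ^ b + s := by rw [hzdec, ← hc1, mul_one]
      -- master equation : X * s = run b j + (ω ^ b + s)
      have hmq : (ω ^ (M + 1) + t) * s = run b j + (ω ^ b + s) := by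
        rw [← hX, ← hmaster, hrun hble hzu, ← hzeq]
      obtain ⟨τ, hτb, hτeq⟩ := peel htM j hs hs hmq
      have hτ0 : τ ≠ 0 := by
        rintro rfl
        rw [mul_zero] at hτeq
        exact absurd hτeq.symm
          (ne_of_gt (lt_of_lt_of_le (opow_pos _ omega0_pos) (le_self_add)))
      obtain ⟨d, e, τ₂, hτdec, he0, heω, hτ₂, hdle⟩ := decomp hτ0
      -- find z' with z = X * z'
      have hfac : ∃ z' : Ordinal, z' ≠ 0 ∧ z = X * z' := by
        rcases eq_or_ne d 0 with hd0 | hd0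
        · -- τ finite : z = X
          have hτ₂0 : τ₂ = 0 := by
            rw [hd0, opow_zero] at hτ₂
            exact Ordinal.lt_one_iff_zero.1 hτ₂
          have hτe : τ = e := by rw [hτdec, hd0, hτ₂0, opow_zero, one_mul, add_zero]
          have hXτ : (ω ^ (M + 1) + t) * τ = ω ^ (M + 1) * e + t := by
            rw [hτe]; exact add_mul_fin htN he0 heω
          rw [hXτ] at hτeq
          have hτeq' : ω ^ (M + 1) * e + t = ω ^ b * 1 + s := by rw [mul_one]; exact hτeq
          obtain ⟨hNb, -, hts⟩ :=
            nf_unique he0 heω one_pos one_lt_omega0 htN hs hτeq'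
          refine ⟨1, one_ne_zero, ?_⟩
          rw [mul_one, hzeq, ← hNb, ← hts, ← hX]
        · have hd1 : 1 ≤ d := Ordinal.one_le_iff_ne_zero.2 hd0
          have hXd : (ω ^ (M + 1) + t) * ω ^ d = ω ^ (M + 1 + d) := by
            rw [← hX]; exact mul_opow_between hXl hXu hd1
          have hXτdec : (ω ^ (M + 1) + t) * τ
              = ω ^ (M + 1 + d) * e + (ω ^ (M + 1) + t) * τ₂ := by
            rw [hτdec, mul_add, ← mul_assoc, hXd]
          have hXτ₂ : (ω ^ (M + 1) + t) * τ₂ < ω ^ (M + 1 + d) := by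
            calc (ω ^ (M + 1) + t) * τ₂ < (ω ^ (M + 1) + t) * ω ^ d := by
                  rw [← hX]; exact (mul_lt_mul_iff_of_pos_left hX0).2 hτ₂
              _ = ω ^ (M + 1 + d) := hXd
          rw [hXτdec] at hτeq
          have hτeq' : ω ^ (M + 1 + d) * e + (ω ^ (M + 1) + t) * τ₂ = ω ^ b * 1 + s := by
            rw [mul_one]; exact hτeq
          obtain ⟨hNdb, -, hs'⟩ :=
            nf_unique he0 heω one_pos one_lt_omega0 hXτ₂ hs hτeq'
          refine ⟨ω ^ d + τ₂, ?_, ?_⟩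
          · exact ne_of_gt (lt_of_lt_of_le (opow_pos _ omega0_pos) (le_self_add))
          · rw [mul_add, hzeq, ← hNdb, ← hs', hX, hXd]
      obtain ⟨z', hz'0, hzfac⟩ := hfac
      -- z' < z
      have hz'le : z' ≤ z := by rw [hzfac]; exact Ordinal.le_mul_right z' hX0
      have hz'ne : z' ≠ z := by
        rintro rfl
        have h1 : z' * X = z' := by rw [hcomm', ← hzfac]
        have h1X : (1 : Ordinal) < X := by
          refine lt_of_lt_of_le ?_ hXl
          calc (1 : Ordinal) < ω := one_lt_omega0
            _ = ω ^ (1 : Ordinal) := (opow_one ω).symm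
            _ ≤ ω ^ (M + 1) := opow_le_opow_right omega0_pos hN1
        have h2 : z' < z' * X := by
          calc z' = z' * 1 := (mul_one z').symm
            _ < z' * X := (mul_lt_mul_iff_of_pos_left hzpos).2 h1X
        exact absurd h1 h2.ne'
      have hz'lt : z' < z := hz'le.lt_of_ne hz'ne
      have hcomm'' : z' * X = X * z' := by
        have h3 : X * (z' * X) = X * (X * z') := by
          rw [← mul_assoc, ← hzfac]; exact hcomm'
        exact (mul_right_inj' hX0.ne').1 h3
      obtain ⟨r, hr⟩ := IH z' hz'lt hz'0 hcomm''
      exact ⟨r + 1, by rw [hzfac, hr, pow_succ']⟩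

lemma t_bounds (n : ℕ) : ∀ {T N : Ordinal}, T = (ω + 1) ^ n → N = (n : Ordinal) →
    ω ^ N ≤ T ∧ T < ω ^ (N + 1) := by
  induction n with
  | zero =>
    intro T N hT hN
    subst hT; subst hN
    constructor
    · simp
    · simp [one_lt_omega0]
  | succ n ih =>
    intro T N hT hN
    obtain ⟨h1, h2⟩ := ih rfl rfl
    have h3 := mul_omega_between h1 h2
    have hstep : T = (ω + 1) ^ n * ω + (ω + 1) ^ n := by
      rw [hT, pow_succ, mul_add, mul_one]
    rw [h3] at hstep
    have hN' : N = (n : Ordinal) + 1 := by rw [hN]; push_cast; ring_nf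
    constructor
    · rw [hN', hstep]
      exact le_self_add
    · rw [hN', hstep]
      exact lt_of_lt_of_le (add_lt_add_right h2 _) double_le

lemma X_eq (n : ℕ) : ∀ {N : Ordinal}, N = (n : Ordinal) →
    (ω + 1) ^ n * (ω ^ (2 : Ordinal) + 1) = ω ^ (N + 1 + 1) + (ω + 1) ^ n := by
  intro N hN
  obtain ⟨h1, h2⟩ := t_bounds n rfl hN
  have h3 := mul_opow_between h1 h2 (one_le_two : (1 : Ordinal) ≤ 2)
  have h4 : N + 1 + 1 = N + 2 := by rw [add_assoc, one_add_one_eq_two]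
  rw [mul_add, mul_one, h3, h4]

end CommPow

theorem commuting_solutions_are_powers (n : ℕ) (z : Ordinal) (hz : z ≠ 0)
    (h : z * ((ω + 1) ^ n * (ω ^ (2 : Ordinal) + 1)) =
         ((ω + 1) ^ n * (ω ^ (2 : Ordinal) + 1)) * z) :
    ∃ r : ℕ, z = ((ω + 1) ^ n * (ω ^ (2 : Ordinal) + 1)) ^ r := by
  refine CommPow.master (M := (n : Ordinal) + 1) (t := (ω + 1) ^ n) (j := n)
    (le_add_self) (CommPow.t_bounds n rfl rfl).2 (CommPow.X_eq n rfl) ?_ z hz h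
  intro c v h1 h2
  exact CommPow.run_mul h1 h2 n
end

section
/- Every prime ordinal is either a finite prime natural number, or of the form ω^μ + 1 for some ordinal μ > 0, or of the form ω^(ω^ξ) for some ordinal ξ. -/
open Ordinal Order

lemma aux_omega0_le_opow {ν : Ordinal} (hν : 0 < ν) : ω ≤ ω ^ ν := by
  simpa using opow_le_opow_right omega0_pos (Order.one_le_iff_pos.2 hν)

lemma aux_one_add_opow {ν : Ordinal} (hν : 0 < ν) : 1 + ω ^ ν = ω ^ ν :=
  one_add_of_omega0_le (aux_omega0_le_opow hν)

/-- Key identity: `(ω^ν + 1) * (t + 1) = ω^ν * (t + 1) + 1` for `ν > 0`. -/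
lemma aux_key {ν : Ordinal} (hν : 0 < ν) :
    ∀ t : Ordinal, (ω ^ ν + 1) * (t + 1) = ω ^ ν * (t + 1) + 1 := by
  intro t
  induction t using Ordinal.limitRecOn with
  | zero => simp
  | add_one s ih =>
      rw [mul_add_one (ω ^ ν + 1) (s + 1), ih, mul_add_one (ω ^ ν) (s + 1)]
      rw [add_assoc (ω ^ ν * (s + 1)) 1 (ω ^ ν + 1), ← add_assoc 1 (ω ^ ν) 1,
        aux_one_add_opow hν, ← add_assoc]
  | limit t ht ih =>
      have hmul : (ω ^ ν + 1) * t = ω ^ ν * t := by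
        apply le_antisymm
        · refine (mul_le_iff_of_isSuccLimit ht).2 fun b hb => ?_
          have h1 : b + 1 < t := by rw [add_one_eq_succ]; exact ht.succ_lt hb
          have h2 : b + 1 + 1 < t := by rw [add_one_eq_succ (b + 1)]; exact ht.succ_lt h1
          calc (ω ^ ν + 1) * b ≤ (ω ^ ν + 1) * (b + 1) :=
                mul_le_mul_right (le_self_add (a := b) (b := 1)) _
            _ = ω ^ ν * (b + 1) + 1 := ih b hb
            _ ≤ ω ^ ν * (b + 1) + ω ^ ν :=
                add_le_add_right (Order.one_le_iff_pos.2 (opow_pos ν omega0_pos)) _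
            _ = ω ^ ν * (b + 1 + 1) := by rw [mul_add_one (ω ^ ν) (b + 1)]
            _ ≤ ω ^ ν * t := mul_le_mul_right h2.le _
        · exact mul_le_mul_left (le_self_add (b := 1)) _
      rw [mul_add_one (ω ^ ν + 1) t, hmul, mul_add_one (ω ^ ν) t, ← add_assoc]

/-- Every positive ordinal is of the form `ω^ν * (t + 1)`. -/
lemma aux_exists_opow_mul_succ : ∀ b : Ordinal, 0 < b → ∃ ν t : Ordinal, b = ω ^ ν * (t + 1) := by
  intro b
  induction b using Ordinal.induction with
  | h b IH =>
    intro hb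
    have hω : (ω : Ordinal) ^ log ω b ≠ 0 := opow_ne_zero _ omega0_ne_zero
    have heq : ω ^ log ω b * (b / ω ^ log ω b) + b % ω ^ log ω b = b := div_add_mod b _
    have hqω : b / ω ^ log ω b < ω := by
      rw [Ordinal.div_lt hω, ← opow_succ]
      exact lt_opow_succ_log_self one_lt_omega0 b
    have hq0 : 0 < b / ω ^ log ω b :=
      (Ordinal.div_pos hω).2 (opow_log_le_self ω hb.ne')
    obtain ⟨n, hn⟩ := lt_omega0.1 hqω
    have hn0 : 0 < n := by
      rw [hn] at hq0; exact_mod_cast hq0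
    obtain ⟨m, rfl⟩ := Nat.exists_eq_succ_of_ne_zero hn0.ne'
    have hr : b % ω ^ log ω b < ω ^ log ω b := mod_lt b hω
    have hcast : ((m + 1 : ℕ) : Ordinal) = (m : Ordinal) + 1 := by push_cast; rfl
    rcases eq_or_ne (b % ω ^ log ω b) 0 with hr0 | hr0
    · refine ⟨log ω b, (m : Ordinal), ?_⟩
      conv_lhs => rw [← heq, hr0, hn]
      rw [add_zero, hcast]
    · have hrb : b % ω ^ log ω b < b := hr.trans_le (opow_log_le_self ω hb.ne')
      obtain ⟨ν, t, hνt⟩ := IH _ hrb (pos_iff_ne_zero.2 hr0)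
      have hνlog : ν ≤ log ω b := by
        have h1 : ω ^ ν ≤ b % ω ^ log ω b := by
          rw [hνt]
          simpa using mul_le_mul_right (le_add_self (a := 1) (b := t)) (ω ^ ν)
        exact le_of_lt ((opow_lt_opow_iff_right one_lt_omega0).1 (h1.trans_lt hr))
      refine ⟨ν, ω ^ (log ω b - ν) * (b / ω ^ log ω b) + t, ?_⟩
      calc b = ω ^ log ω b * (b / ω ^ log ω b) + ω ^ ν * (t + 1) := by rw [← hνt, heq]
        _ = ω ^ ν * (ω ^ (log ω b - ν) * (b / ω ^ log ω b)) + ω ^ ν * (t + 1) := by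
            rw [← mul_assoc, ← opow_add, Ordinal.add_sub_cancel_of_le hνlog]
        _ = ω ^ ν * (ω ^ (log ω b - ν) * (b / ω ^ log ω b) + (t + 1)) := (mul_add _ _ _).symm
        _ = ω ^ ν * (ω ^ (log ω b - ν) * (b / ω ^ log ω b) + t + 1) := by rw [add_assoc]

theorem prime_ordinal_classification (α : Ordinal) (h : OrdinalPrime α) :
    (∃ p : ℕ, Nat.Prime p ∧ α = p) ∨
    (∃ μ : Ordinal, 0 < μ ∧ α = ω ^ μ + 1) ∨
    (∃ ξ : Ordinal, α = ω ^ ω ^ ξ) := by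
  obtain ⟨h1, hnc⟩ := h
  have hα0 : 0 < α := zero_lt_one.trans h1
  rcases lt_or_ge α ω with hfin | hinf
  · -- finite case
    left
    obtain ⟨n, rfl⟩ := lt_omega0.1 hfin
    refine ⟨n, ?_, rfl⟩
    have h2 : 2 ≤ n := by exact_mod_cast h1
    rw [Nat.prime_def_lt]
    refine ⟨h2, fun m hm hdvd => ?_⟩
    by_contra hm1
    obtain ⟨c, hc⟩ := hdvd
    have hm0 : m ≠ 0 := by rintro rfl; simp at hc; omega
    have hm2 : 2 ≤ m := by omega
    have hc0 : c ≠ 0 := by rintro rfl; simp at hc; omega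
    have hcn : c < n := by
      rw [hc]
      exact lt_of_lt_of_le (by omega : c < 2 * c)
        (Nat.mul_le_mul_right c hm2)
    exact hnc ⟨m, c, by exact_mod_cast hm, by exact_mod_cast hcn,
      by rw [hc, natCast_mul]⟩
  · -- infinite case
    have hq0 : 0 < α / ω := (Ordinal.div_pos omega0_ne_zero).2 hinf
    have heq : ω * (α / ω) + α % ω = α := div_add_mod α ω
    have hk : α % ω < ω := mod_lt α omega0_ne_zero
    have hlim : IsSuccLimit (ω * (α / ω)) := isSuccLimit_mul_left isSuccLimit_omega0 hq0
    obtain ⟨n, hn⟩ := lt_omega0.1 hk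
    have hmain : ∀ {ν t : Ordinal}, ω * (α / ω) = ω ^ ν * (t + 1) → 0 < ν := by
      intro ν t hνt
      rw [pos_iff_ne_zero]
      rintro rfl
      rw [opow_zero, one_mul] at hνt
      have h2 := hlim.succ_lt (hνt ▸ (lt_succ t).trans_eq (add_one_eq_succ t).symm)
      rw [← add_one_eq_succ, ← hνt] at h2
      exact lt_irrefl _ h2
    cases n with
    | zero =>
      -- α is a limit ordinal
      rw [hn, Nat.cast_zero, add_zero] at heq
      obtain ⟨ν, t, hνt⟩ := aux_exists_opow_mul_succ α hα0
      have hν0 : 0 < ν := hmain (heq.trans hνt)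
      have ht0 : t = 0 := by
        by_contra ht
        have htpos : 0 < t := pos_iff_ne_zero.2 ht
        apply hnc
        refine ⟨ω ^ ν, t + 1, ?_, ?_, hνt⟩
        · rw [hνt]
          have h1t : (1 : Ordinal) < t + 1 := by
            rw [add_one_eq_succ, lt_succ_iff]
            exact Order.one_le_iff_pos.2 htpos
          calc ω ^ ν = ω ^ ν * 1 := (mul_one _).symm
            _ < ω ^ ν * (t + 1) := mul_lt_mul_of_pos_left h1t (opow_pos ν omega0_pos)
        · rw [hνt]
          calc t + 1 < t + ω := add_lt_add_right one_lt_omega0 t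
            _ ≤ ω * t + ω := add_le_add_left (le_mul_right t omega0_pos) ω
            _ = ω * (t + 1) := by rw [mul_add_one]
            _ ≤ ω ^ ν * (t + 1) := mul_le_mul_left (aux_omega0_le_opow hν0) _
      rw [ht0, zero_add, mul_one] at hνt
      -- ν is additively indecomposable
      have hp : Principal (· + ·) ν := by
        intro a b ha hb
        by_contra hab
        push_neg at hab
        apply hnc
        have hb' : ν - a ≤ b := Ordinal.sub_le.2 hab
        refine ⟨ω ^ a, ω ^ (ν - a), ?_, ?_, ?_⟩
        · rw [hνt]; exact (opow_lt_opow_iff_right one_lt_omega0).2 ha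
        · rw [hνt]
          exact (opow_lt_opow_iff_right one_lt_omega0).2 (hb'.trans_lt hb)
        · rw [hνt, ← opow_add, Ordinal.add_sub_cancel_of_le ha.le]
      rcases principal_add_iff_zero_or_omega0_opow.1 hp with rfl | ⟨ξ, rfl⟩
      · exact absurd hν0 (lt_irrefl 0)
      · exact Or.inr (Or.inr ⟨ξ, hνt⟩)
    | succ m =>
      -- α = ω*(α/ω) + (m+1)
      have hcast1 : ((m + 1 : ℕ) : Ordinal) = (m : Ordinal) + 1 := by push_cast; rfl
      have hm0 : m = 0 := by
        by_contra hm
        apply hnc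
        have hcast : ((m : Ordinal) + 1) * ω = ω := by
          rw [← hcast1]; exact natCast_mul_omega0 (Nat.succ_pos m)
        refine ⟨(m : Ordinal) + 1, ω * (α / ω) + 1, ?_, ?_, ?_⟩
        · exact lt_of_lt_of_le (by exact_mod_cast nat_lt_omega0 (m + 1)) hinf
        · conv_rhs => rw [← heq, hn]
          rw [hcast1]
          apply add_lt_add_right
          exact_mod_cast (by omega : 1 < m + 1)
        · rw [mul_add_one ((m : Ordinal) + 1) (ω * (α / ω)), ← mul_assoc, hcast,
            ← hcast1, ← hn]
          exact heq.symm
      rw [hm0] at hn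
      norm_num at hn
      rw [hn] at heq
      obtain ⟨ν, t, hνt⟩ := aux_exists_opow_mul_succ (ω * (α / ω)) hlim.pos
      have hν0 : 0 < ν := hmain hνt
      have ht0 : t = 0 := by
        by_contra ht
        have htpos : 0 < t := pos_iff_ne_zero.2 ht
        apply hnc
        refine ⟨ω ^ ν + 1, t + 1, ?_, ?_, ?_⟩
        · conv_rhs => rw [← heq, hνt]
          rw [add_one_eq_succ (ω ^ ν), add_one_eq_succ (ω ^ ν * (t + 1)), succ_lt_succ_iff]
          have h1t : (1 : Ordinal) < t + 1 := by
            rw [add_one_eq_succ, lt_succ_iff]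
            exact Order.one_le_iff_pos.2 htpos
          calc ω ^ ν = ω ^ ν * 1 := (mul_one _).symm
            _ < ω ^ ν * (t + 1) := mul_lt_mul_of_pos_left h1t (opow_pos ν omega0_pos)
        · conv_rhs => rw [← heq, hνt]
          rw [add_one_eq_succ (ω ^ ν * (t + 1)), add_one_eq_succ t, succ_lt_succ_iff]
          calc t < succ t := lt_succ t
            _ ≤ ω ^ ν * succ t := le_mul_right _ (opow_pos ν omega0_pos)
        · rw [aux_key hν0 t, ← hνt]
          exact heq.symm
      rw [ht0, zero_add, mul_one] at hνt
      refine Or.inr (Or.inl ⟨ν, hν0, ?_⟩)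
      conv_lhs => rw [← heq, hνt]
end

section
/- For every ordinal ξ, the ordinal ω^(ω^ξ) is multiplicatively prime: it cannot be written as a product of two strictly smaller ordinals. -/
open Ordinal

theorem omega_omega_pow_prime (ξ : Ordinal) :
    1 < ω ^ ω ^ ξ ∧
    ∀ β γ : Ordinal, ω ^ ω ^ ξ = β * γ → β = ω ^ ω ^ ξ ∨ γ = ω ^ ω ^ ξ := by
  have h1 : 1 < ω ^ ω ^ ξ := by
    rw [← opow_zero ω]
    exact (opow_lt_opow_iff_right one_lt_omega0).2 (opow_pos ξ omega0_pos)
  refine ⟨h1, fun β γ h => ?_⟩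
  by_contra hc
  push_neg at hc
  obtain ⟨hβ, hγ⟩ := hc
  have hpos : (0:Ordinal) < ω ^ ω ^ ξ := lt_trans zero_lt_one h1
  have hβ0 : 0 < β := by
    rcases eq_zero_or_pos β with rfl | hb
    · rw [zero_mul] at h; exact absurd h hpos.ne'
    · exact hb
  have hγ0 : 0 < γ := by
    rcases eq_zero_or_pos γ with rfl | hg
    · rw [mul_zero] at h; exact absurd h hpos.ne'
    · exact hg
  have hβle : β ≤ ω ^ ω ^ ξ := h ▸ Ordinal.le_mul_left β hγ0
  have hγle : γ ≤ ω ^ ω ^ ξ := h ▸ Ordinal.le_mul_right γ hβ0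
  have hlt : β * γ < ω ^ ω ^ ξ :=
    principal_mul_omega0_opow_opow ξ (lt_of_le_of_ne hβle hβ) (lt_of_le_of_ne hγle hγ)
  exact absurd h.symm hlt.ne
end
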